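/- Let t ≠ 0 be real and κ > 0. Then z = it is a root of Q(z; κ) = e^z (1 + z²/κ²) - (1 + z) if and only if cos t < 0, tan t = t, and κ² = t²/(1 - sec t) = √(1 + t²) - 1. -/

import Mathlib

lemma Q_imag_real_char (κ t : ℝ) (hκ : 0 < κ) (ht : t ≠ 0) :
    (Real.cos t * (1 - t^2/κ^2) = 1 ∧ Real.sin t * (1 - t^2/κ^2) = t) ↔
    (Real.cos t < 0 ∧ Real.tan t = t ∧
        κ ^ 2 = t ^ 2 / (1 - (Real.cos t)⁻¹) ∧
        κ ^ 2 = Real.sqrt (1 + t ^ 2) - 1) := by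
  set c := Real.cos t with hc
  set s := Real.sin t with hs
  have hκ2 : (0:ℝ) < κ^2 := by positivity
  have ht2 : (0:ℝ) < t^2 := by positivity
  have hpyth : s^2 + c^2 = 1 := Real.sin_sq_add_cos_sq t
  set a := 1 - t^2/κ^2 with ha
  have hta : t^2 = κ^2*(1-a) := by rw [ha]; field_simp; ring
  constructor
  · rintro ⟨h1, h2⟩
    have hc0 : c ≠ 0 := by intro h; rw [h] at h1; simp at h1
    have e1 : (c*a)^2 = 1 := by rw [h1]; norm_num
    have e2 : (s*a)^2 = t^2 := by rw [h2]
    have ha2 : a^2 = 1 + t^2 := by linear_combination (-(a^2))*hpyth + e1 + e2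
    have ha1 : a < 1 := by
      have h' : 0 < t^2/κ^2 := by positivity
      rw [ha]; linarith
    have haneg : a < -1 := by nlinarith
    have hcneg : c < 0 := by nlinarith
    have hsqrt : Real.sqrt (1 + t^2) = -a := by
      rw [← ha2, Real.sqrt_sq_eq_abs, abs_of_neg (by linarith : a < 0)]
    refine ⟨hcneg, ?_, ?_, ?_⟩
    · rw [Real.tan_eq_sin_div_cos]
      rw [div_eq_iff (show Real.cos t ≠ 0 from hc0)]
      show s = t * c
      linear_combination c*h2 - s*h1
    · have hainv : c⁻¹ = a := by
        field_simp
        linear_combination -h1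
      rw [hainv]
      have h1a : 1 - a = t^2/κ^2 := by rw [ha]; ring
      rw [h1a]
      rw [div_div_eq_mul_div]
      field_simp
    · rw [hsqrt]
      have key : (1-a) * (κ^2 + a + 1) = 0 := by linear_combination (-1)*ha2 - hta
      have h1a : (0:ℝ) < 1 - a := by linarith
      have : κ^2 + a + 1 = 0 := by
        rcases mul_eq_zero.1 key with h | h
        · linarith
        · exact h
      linarith
  · rintro ⟨hcneg, htan, _, hκsq⟩
    set r := Real.sqrt (1 + t^2) with hr
    have hrnn : 0 ≤ r := Real.sqrt_nonneg _
    have hr2 : r^2 = 1 + t^2 := Real.sq_sqrt (by positivity)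
    have hr1 : 1 < r := by nlinarith
    have hrne : r - 1 ≠ 0 := sub_ne_zero.2 (by linarith)
    have haval : a = -r := by
      rw [ha, hκsq]
      field_simp
      linear_combination hr2
    have hst : s = t * c := by
      rw [Real.tan_eq_sin_div_cos, div_eq_iff (show Real.cos t ≠ 0 from hcneg.ne)] at htan
      exact htan
    have e : c^2*(1+t^2) = 1 := by linear_combination hpyth - (s + t*c)*hst
    have e2 : (c*r)^2 = 1 := by linear_combination c^2*hr2 + e
    have hcr : c * r = -1 := by
      nlinarith [mul_neg_of_neg_of_pos hcneg (by linarith : (0:ℝ) < r), sq_nonneg (c*r+1)]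
    constructor
    · rw [haval]; linear_combination -hcr
    · rw [haval, hst]; linear_combination (-t)*hcr

/-- Characterization of the purely imaginary roots of `Q(z;κ)`. -/
theorem Q_imaginary_roots (κ t : ℝ) (hκ : 0 < κ) (ht : t ≠ 0)
    (Q : ℂ → ℂ)
    (hQ : ∀ z : ℂ, Q z = Complex.exp z * (1 + z ^ 2 / (κ : ℂ) ^ 2) - (1 + z)) :
    Q ((t : ℂ) * Complex.I) = 0 ↔
      (Real.cos t < 0 ∧ Real.tan t = t ∧
        κ ^ 2 = t ^ 2 / (1 - (Real.cos t)⁻¹) ∧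
        κ ^ 2 = Real.sqrt (1 + t ^ 2) - 1) := by
  rw [hQ]
  rw [← Q_imag_real_char κ t hκ ht]
  have h1 : 1 + ((t:ℂ)*Complex.I)^2/(κ:ℂ)^2 = ((1 - t^2/κ^2 : ℝ) : ℂ) := by
    push_cast
    rw [mul_pow, Complex.I_sq]
    ring
  rw [sub_eq_zero, h1, Complex.exp_mul_I, ← Complex.ofReal_cos, ← Complex.ofReal_sin,
    Complex.ext_iff]
  simp [← Complex.ofReal_pow, ← Complex.ofReal_div, Complex.cos_ofReal_re, Complex.sin_ofReal_re]
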